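/- Let n, m, s, t, d ≥ 1 and Δ̄ ≥ 1 be integers and consider a 4-block ILP instance with blocks A ∈ ℤ^{m×s}, B_i ∈ ℤ^{m×t}, C_i ∈ ℤ^{d×s}, D_i ∈ ℤ^{d×t} (i ∈ [n]), all with entries of absolute value at most Δ̄, right-hand sides b_0 ∈ ℤ^m and b_i ∈ ℤ^d (i ∈ [n]), and objective vectors c_0 ∈ ℤ^s and c_i ∈ ℤ^t (i ∈ [n]). Set t' = (2Δ̄+1)^{m+d}. Then there exists a B-uniform 4-block ILP instance with the same n, m, s, with t' local variables per brick and d + 1 local constraints per brick (blocks A' ∈ ℤ^{m×s}, a single B' ∈ ℤ^{m×t'}, C_i' ∈ ℤ^{(d+1)×s}, D_i' ∈ ℤ^{(d+1)×t'}), all entries of absolute value at most max(Δ̄, 1), such that (i) the new instance is feasible if and only if the original instance is feasible, and (ii) the infimum of the objective value over feasible solutions of the new instance equals the infimum of the objective value over feasible solutions of the original instance. -/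

import Mathlib

/-- Feasibility of a solution `(x0, x)` for the 4-block ILP with data
`(A, B, C, D, b0, b)`. -/
def FourBlockFeasible {n m s t d : ℕ}
    (A : Matrix (Fin m) (Fin s) ℤ) (B : Fin n → Matrix (Fin m) (Fin t) ℤ)
    (C : Fin n → Matrix (Fin d) (Fin s) ℤ) (D : Fin n → Matrix (Fin d) (Fin t) ℤ)
    (b0 : Fin m → ℤ) (b : Fin n → Fin d → ℤ)
    (x0 : Fin s → ℤ) (x : Fin n → Fin t → ℤ) : Prop :=
  (∀ j, 0 ≤ x0 j) ∧ (∀ i j, 0 ≤ x i j) ∧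
  A.mulVec x0 + ∑ i, (B i).mulVec (x i) = b0 ∧
  ∀ i, (C i).mulVec x0 + (D i).mulVec (x i) = b i

/-- The objective value `c0ᵀx0 + Σᵢ cᵢᵀxᵢ` of a solution of a 4-block ILP. -/
def FourBlockObj {n s t : ℕ} (c0 : Fin s → ℤ) (c : Fin n → Fin t → ℤ)
    (x0 : Fin s → ℤ) (x : Fin n → Fin t → ℤ) : ℤ :=
  dotProduct c0 x0 + ∑ i, dotProduct (c i) (x i)

namespace BUredAux
open Finset


def colv (Δ N : ℕ) (k : Fin ((2*Δ+1)^N)) (l : Fin N) : ℤ :=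
  ((finFunctionFinEquiv.symm k l : ℕ) : ℤ) - (Δ : ℤ)

def encv (Δ N : ℕ) (v : Fin N → ℤ) : Fin ((2*Δ+1)^N) :=
  finFunctionFinEquiv (fun l => ⟨min (v l + Δ).toNat (2*Δ), by omega⟩)

lemma abs_colv_le (Δ N : ℕ) (k : Fin ((2*Δ+1)^N)) (l : Fin N) :
    |colv Δ N k l| ≤ (Δ : ℤ) := by
  have h : (finFunctionFinEquiv.symm k l : ℕ) < 2*Δ+1 := (finFunctionFinEquiv.symm k l).isLt
  rw [abs_le]; unfold colv; omega

lemma colv_encv (Δ N : ℕ) (v : Fin N → ℤ) (hv : ∀ l, |v l| ≤ (Δ : ℤ)) (l : Fin N) :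
    colv Δ N (encv Δ N v) l = v l := by
  have hv' := hv l
  rw [abs_le] at hv'
  unfold colv encv
  rw [Equiv.symm_apply_apply]
  show ((min (v l + Δ).toNat (2*Δ) : ℕ) : ℤ) - (Δ:ℤ) = v l
  omega

variable {n m s t d : ℕ}

/-- the combined column of brick variable `j` in brick `i`. -/
def vcol (B : Fin n → Matrix (Fin m) (Fin t) ℤ) (D : Fin n → Matrix (Fin d) (Fin t) ℤ)
    (i : Fin n) (j : Fin t) : Fin (m+d) → ℤ :=
  Fin.append (fun r => B i r j) (fun r => D i r j)

def enc (Δ : ℕ) (B : Fin n → Matrix (Fin m) (Fin t) ℤ) (D : Fin n → Matrix (Fin d) (Fin t) ℤ)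
    (i : Fin n) (j : Fin t) : Fin ((2*Δ+1)^(m+d)) :=
  encv Δ (m+d) (vcol B D i j)

lemma abs_vcol (Δ : ℕ) (B : Fin n → Matrix (Fin m) (Fin t) ℤ)
    (D : Fin n → Matrix (Fin d) (Fin t) ℤ)
    (hB : ∀ k i j, |B k i j| ≤ (Δ:ℤ)) (hD : ∀ k i j, |D k i j| ≤ (Δ:ℤ))
    (i : Fin n) (j : Fin t) (l : Fin (m+d)) : |vcol B D i j l| ≤ (Δ:ℤ) := by
  refine Fin.addCases (motive := fun l => |vcol B D i j l| ≤ (Δ:ℤ)) (fun r => ?_) (fun r => ?_) l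
  · simp only [vcol, Fin.append_left]; exact hB i r j
  · simp only [vcol, Fin.append_right]; exact hD i r j

lemma colv_enc_left (Δ : ℕ) (B : Fin n → Matrix (Fin m) (Fin t) ℤ)
    (D : Fin n → Matrix (Fin d) (Fin t) ℤ)
    (hB : ∀ k i j, |B k i j| ≤ (Δ:ℤ)) (hD : ∀ k i j, |D k i j| ≤ (Δ:ℤ))
    (i : Fin n) (j : Fin t) (r : Fin m) :
    colv Δ (m+d) (enc Δ B D i j) (Fin.castAdd d r) = B i r j := by
  rw [enc, colv_encv _ _ _ (abs_vcol Δ B D hB hD i j), vcol, Fin.append_left]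

lemma colv_enc_right (Δ : ℕ) (B : Fin n → Matrix (Fin m) (Fin t) ℤ)
    (D : Fin n → Matrix (Fin d) (Fin t) ℤ)
    (hB : ∀ k i j, |B k i j| ≤ (Δ:ℤ)) (hD : ∀ k i j, |D k i j| ≤ (Δ:ℤ))
    (i : Fin n) (j : Fin t) (r : Fin d) :
    colv Δ (m+d) (enc Δ B D i j) (Fin.natAdd m r) = D i r j := by
  rw [enc, colv_encv _ _ _ (abs_vcol Δ B D hB hD i j), vcol, Fin.append_right]

/-- the fiber of brick variables mapping to column index `k`. -/
def Fib (Δ : ℕ) (B : Fin n → Matrix (Fin m) (Fin t) ℤ) (D : Fin n → Matrix (Fin d) (Fin t) ℤ)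
    (i : Fin n) (k : Fin ((2*Δ+1)^(m+d))) : Finset (Fin t) :=
  Finset.univ.filter (fun j => enc Δ B D i j = k)

lemma mem_Fib {Δ : ℕ} {B : Fin n → Matrix (Fin m) (Fin t) ℤ}
    {D : Fin n → Matrix (Fin d) (Fin t) ℤ} {i k} {j : Fin t} :
    j ∈ Fib Δ B D i k ↔ enc Δ B D i j = k := by simp [Fib]

noncomputable def jsel (Δ : ℕ) (B : Fin n → Matrix (Fin m) (Fin t) ℤ)
    (D : Fin n → Matrix (Fin d) (Fin t) ℤ) (c : Fin n → Fin t → ℤ) (j₀ : Fin t)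
    (i : Fin n) (k : Fin ((2*Δ+1)^(m+d))) : Fin t :=
  if h : (Fib Δ B D i k).Nonempty then (Finset.exists_mem_eq_inf' h (c i)).choose else j₀

lemma jsel_mem {Δ : ℕ} {B : Fin n → Matrix (Fin m) (Fin t) ℤ}
    {D : Fin n → Matrix (Fin d) (Fin t) ℤ} {c : Fin n → Fin t → ℤ} {j₀ i k}
    (h : (Fib Δ B D i k).Nonempty) : jsel Δ B D c j₀ i k ∈ Fib Δ B D i k := by
  rw [jsel, dif_pos h]
  exact (Finset.exists_mem_eq_inf' h (c i)).choose_spec.1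

lemma enc_jsel {Δ : ℕ} {B : Fin n → Matrix (Fin m) (Fin t) ℤ}
    {D : Fin n → Matrix (Fin d) (Fin t) ℤ} {c : Fin n → Fin t → ℤ} {j₀ i k}
    (h : (Fib Δ B D i k).Nonempty) : enc Δ B D i (jsel Δ B D c j₀ i k) = k :=
  mem_Fib.1 (jsel_mem h)

lemma jsel_min {Δ : ℕ} {B : Fin n → Matrix (Fin m) (Fin t) ℤ}
    {D : Fin n → Matrix (Fin d) (Fin t) ℤ} {c : Fin n → Fin t → ℤ} {j₀ i k}
    (h : (Fib Δ B D i k).Nonempty) {j : Fin t} (hj : j ∈ Fib Δ B D i k) :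
    c i (jsel Δ B D c j₀ i k) ≤ c i j := by
  rw [jsel, dif_pos h, ← (Finset.exists_mem_eq_inf' h (c i)).choose_spec.2]
  exact Finset.inf'_le _ hj

/-- key sum identity used for mapping old solutions to new ones. -/
lemma sum_mul_fiber {Δ : ℕ} (B : Fin n → Matrix (Fin m) (Fin t) ℤ)
    (D : Fin n → Matrix (Fin d) (Fin t) ℤ) (i : Fin n)
    (g : Fin ((2*Δ+1)^(m+d)) → ℤ) (x : Fin t → ℤ) :
    ∑ k, g k * (∑ j ∈ Fib Δ B D i k, x j) = ∑ j, g (enc Δ B D i j) * x j := by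
  calc ∑ k, g k * (∑ j ∈ Fib Δ B D i k, x j)
      = ∑ k, ∑ j ∈ Fib Δ B D i k, g (enc Δ B D i j) * x j := by
        refine Finset.sum_congr rfl fun k _ => ?_
        rw [Finset.mul_sum]
        exact Finset.sum_congr rfl fun j hj => by rw [mem_Fib.1 hj]
    _ = _ := Finset.sum_fiberwise _ _ _

/-- key sum identity used for mapping new solutions back to old ones. -/
lemma sum_mul_sel {Δ : ℕ} (B : Fin n → Matrix (Fin m) (Fin t) ℤ)
    (D : Fin n → Matrix (Fin d) (Fin t) ℤ) (c : Fin n → Fin t → ℤ) (j₀ : Fin t) (i : Fin n)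
    (g : Fin t → ℤ) (y : Fin ((2*Δ+1)^(m+d)) → ℤ) :
    ∑ j, g j * (if jsel Δ B D c j₀ i (enc Δ B D i j) = j then y (enc Δ B D i j) else 0)
      = ∑ k, (if (Fib Δ B D i k).Nonempty then g (jsel Δ B D c j₀ i k) else 0) * y k := by
  classical
  have hL : ∑ j, g j * (if jsel Δ B D c j₀ i (enc Δ B D i j) = j then y (enc Δ B D i j) else 0)
      = ∑ j ∈ Finset.univ.filter (fun j => jsel Δ B D c j₀ i (enc Δ B D i j) = j),
          g j * y (enc Δ B D i j) := by
    rw [Finset.sum_filter]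
    exact Finset.sum_congr rfl fun j _ => by split <;> simp
  have hR : ∑ k, (if (Fib Δ B D i k).Nonempty then g (jsel Δ B D c j₀ i k) else 0) * y k
      = ∑ k ∈ Finset.univ.filter (fun k => (Fib Δ B D i k).Nonempty),
          g (jsel Δ B D c j₀ i k) * y k := by
    rw [Finset.sum_filter]
    exact Finset.sum_congr rfl fun k _ => by split <;> simp
  rw [hL, hR]
  refine Finset.sum_bij' (fun j _ => enc Δ B D i j) (fun k _ => jsel Δ B D c j₀ i k)
    ?_ ?_ ?_ ?_ ?_
  · intro j hj
    simp only [Finset.mem_filter, Finset.mem_univ, true_and] at hj ⊢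
    exact ⟨j, mem_Fib.2 rfl⟩
  · intro k hk
    simp only [Finset.mem_filter, Finset.mem_univ, true_and] at hk ⊢
    rw [enc_jsel hk]
  · intro j hj
    simp only [Finset.mem_filter, Finset.mem_univ, true_and] at hj
    exact hj
  · intro k hk
    simp only [Finset.mem_filter, Finset.mem_univ, true_and] at hk
    exact enc_jsel hk
  · intro j hj
    simp only [Finset.mem_filter, Finset.mem_univ, true_and] at hj
    rw [hj]
-- construction of the primed data
def Bmat (Δ m d : ℕ) : Matrix (Fin m) (Fin ((2*Δ+1)^(m+d))) ℤ :=
  fun r k => colv Δ (m+d) k (Fin.castAdd d r)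

def Cmat {n s d : ℕ} (C : Fin n → Matrix (Fin d) (Fin s) ℤ) (i : Fin n) :
    Matrix (Fin (d+1)) (Fin s) ℤ :=
  fun r j => if h : (r:ℕ) < d then C i ⟨r,h⟩ j else 0

def Dmat {n m t d : ℕ} (Δ : ℕ) (B : Fin n → Matrix (Fin m) (Fin t) ℤ)
    (D : Fin n → Matrix (Fin d) (Fin t) ℤ) (i : Fin n) :
    Matrix (Fin (d+1)) (Fin ((2*Δ+1)^(m+d))) ℤ :=
  fun r k => if h : (r:ℕ) < d then colv Δ (m+d) k (Fin.natAdd m ⟨r,h⟩)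
             else if (Fib Δ B D i k).Nonempty then 0 else 1

def bvec {n d : ℕ} (b : Fin n → Fin d → ℤ) (i : Fin n) (r : Fin (d+1)) : ℤ :=
  if h : (r:ℕ) < d then b i ⟨r,h⟩ else 0

noncomputable def cvec {n m t d : ℕ} (Δ : ℕ) (B : Fin n → Matrix (Fin m) (Fin t) ℤ)
    (D : Fin n → Matrix (Fin d) (Fin t) ℤ) (c : Fin n → Fin t → ℤ) (j₀ : Fin t)
    (i : Fin n) (k : Fin ((2*Δ+1)^(m+d))) : ℤ :=
  if (Fib Δ B D i k).Nonempty then c i (jsel Δ B D c j₀ i k) else 0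

lemma sInf_eq_of_subset (S' S : Set ℝ) (hsub : S' ⊆ S)
    (hcof : ∀ v ∈ S, ∃ w ∈ S', w ≤ v) : sInf S' = sInf S := by
  rcases S.eq_empty_or_nonempty with hS | hS
  · rw [hS] at hsub ⊢
    rw [Set.subset_empty_iff] at hsub
    rw [hsub]
  · have hS' : S'.Nonempty := by
      obtain ⟨v, hv⟩ := hS
      obtain ⟨w, hw, -⟩ := hcof v hv
      exact ⟨w, hw⟩
    by_cases hbdd : BddBelow S
    · refine le_antisymm (le_csInf hS fun v hv => ?_) (csInf_le_csInf hbdd hS' hsub)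
      obtain ⟨w, hw, hwv⟩ := hcof v hv
      exact (csInf_le (hbdd.mono hsub) hw).trans hwv
    · have hbdd' : ¬BddBelow S' := by
        rintro ⟨L, hL⟩
        refine hbdd ⟨L, fun v hv => ?_⟩
        obtain ⟨w, hw, hwv⟩ := hcof v hv
        exact (hL hw).trans hwv
      rw [Real.sInf_of_not_bddBelow hbdd, Real.sInf_of_not_bddBelow hbdd']
lemma forward {n m s t d : ℕ} (Δ : ℕ) (j₀ : Fin t)
    (A : Matrix (Fin m) (Fin s) ℤ) (B : Fin n → Matrix (Fin m) (Fin t) ℤ)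
    (C : Fin n → Matrix (Fin d) (Fin s) ℤ) (D : Fin n → Matrix (Fin d) (Fin t) ℤ)
    (hB : ∀ k i j, |B k i j| ≤ (Δ:ℤ)) (hD : ∀ k i j, |D k i j| ≤ (Δ:ℤ))
    (b0 : Fin m → ℤ) (b : Fin n → Fin d → ℤ) (c0 : Fin s → ℤ) (c : Fin n → Fin t → ℤ)
    (x0 : Fin s → ℤ) (x : Fin n → Fin t → ℤ)
    (hf : FourBlockFeasible A B C D b0 b x0 x) :
    ∃ y, FourBlockFeasible A (fun _ => Bmat Δ m d) (Cmat C) (Dmat Δ B D) b0 (bvec b) x0 y ∧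
      FourBlockObj c0 (cvec Δ B D c j₀) x0 y ≤ FourBlockObj c0 c x0 x := by
  obtain ⟨hx0, hx, hmain, hloc⟩ := hf
  refine ⟨fun i k => ∑ j ∈ Fib Δ B D i k, x i j,
    ⟨hx0, fun i k => Finset.sum_nonneg fun j _ => hx i j, ?_, ?_⟩, ?_⟩
  · have hBeq : ∀ i, (Bmat Δ m d).mulVec (fun k => ∑ j ∈ Fib Δ B D i k, x i j)
        = (B i).mulVec (x i) := by
      intro i; funext r
      simp only [Matrix.mulVec, dotProduct]
      rw [sum_mul_fiber B D i (fun k => Bmat Δ m d r k) (x i)]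
      refine Finset.sum_congr rfl fun j _ => ?_
      simp only [Bmat]
      rw [colv_enc_left Δ B D hB hD]
    calc A.mulVec x0 + ∑ i, (Bmat Δ m d).mulVec (fun k => ∑ j ∈ Fib Δ B D i k, x i j)
        = A.mulVec x0 + ∑ i, (B i).mulVec (x i) := by
          congr 1; exact Finset.sum_congr rfl fun i _ => hBeq i
      _ = b0 := hmain
  · intro i; funext r
    by_cases hr : (r:ℕ) < d
    · have hold := congrFun (hloc i) ⟨(r:ℕ), hr⟩
      simp only [Pi.add_apply, Matrix.mulVec, dotProduct] at hold ⊢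
      simp only [Cmat, Dmat, bvec, dif_pos hr]
      rw [sum_mul_fiber B D i (fun k => colv Δ (m+d) k (Fin.natAdd m ⟨(r:ℕ),hr⟩)) (x i)]
      have : ∑ j, colv Δ (m+d) (enc Δ B D i j) (Fin.natAdd m ⟨(r:ℕ),hr⟩) * x i j
          = ∑ j, D i ⟨(r:ℕ),hr⟩ j * x i j :=
        Finset.sum_congr rfl fun j _ => by rw [colv_enc_right Δ B D hB hD]
      rw [this]
      exact hold
    · simp only [Pi.add_apply, Matrix.mulVec, dotProduct, Cmat, Dmat, bvec,
        dif_neg hr]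
      rw [sum_mul_fiber B D i
        (fun k => if (Fib Δ B D i k).Nonempty then (0:ℤ) else 1) (x i)]
      have h2 : ∑ j, (if (Fib Δ B D i (enc Δ B D i j)).Nonempty then (0:ℤ) else 1) * x i j
          = 0 :=
        Finset.sum_eq_zero fun j _ => by rw [if_pos ⟨j, mem_Fib.2 rfl⟩, zero_mul]
      rw [h2]
      simp
  · simp only [FourBlockObj]
    refine add_le_add le_rfl (Finset.sum_le_sum fun i _ => ?_)
    simp only [dotProduct]
    rw [sum_mul_fiber B D i (fun k => cvec Δ B D c j₀ i k) (x i)]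
    refine Finset.sum_le_sum fun j _ => ?_
    have hne : (Fib Δ B D i (enc Δ B D i j)).Nonempty := ⟨j, mem_Fib.2 rfl⟩
    simp only [cvec, if_pos hne]
    exact mul_le_mul_of_nonneg_right (jsel_min hne (mem_Fib.2 rfl)) (hx i j)
lemma backward {n m s t d : ℕ} (Δ : ℕ) (j₀ : Fin t)
    (A : Matrix (Fin m) (Fin s) ℤ) (B : Fin n → Matrix (Fin m) (Fin t) ℤ)
    (C : Fin n → Matrix (Fin d) (Fin s) ℤ) (D : Fin n → Matrix (Fin d) (Fin t) ℤ)
    (hB : ∀ k i j, |B k i j| ≤ (Δ:ℤ)) (hD : ∀ k i j, |D k i j| ≤ (Δ:ℤ))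
    (b0 : Fin m → ℤ) (b : Fin n → Fin d → ℤ) (c0 : Fin s → ℤ) (c : Fin n → Fin t → ℤ)
    (x0 : Fin s → ℤ) (y : Fin n → Fin ((2*Δ+1)^(m+d)) → ℤ)
    (hf : FourBlockFeasible A (fun _ => Bmat Δ m d) (Cmat C) (Dmat Δ B D) b0 (bvec b) x0 y) :
    ∃ x, FourBlockFeasible A B C D b0 b x0 x ∧
      FourBlockObj c0 c x0 x = FourBlockObj c0 (cvec Δ B D c j₀) x0 y := by
  obtain ⟨hx0, hy, hmain, hloc⟩ := hf
  -- unused columns carry no weight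
  have hy0 : ∀ i k, ¬(Fib Δ B D i k).Nonempty → y i k = 0 := by
    intro i k hk
    have hold := congrFun (hloc i) (Fin.last d)
    have hdlt : ¬((Fin.last d : Fin (d+1)) : ℕ) < d := by simp [Fin.last]
    simp only [Pi.add_apply, Matrix.mulVec, dotProduct, Cmat, Dmat, bvec,
      dif_neg hdlt, zero_mul, Finset.sum_const_zero, zero_add] at hold
    have hterm : ∀ k' ∈ Finset.univ,
        0 ≤ (if (Fib Δ B D i k').Nonempty then (0:ℤ) else 1) * y i k' := by
      intro k' _
      split
      · simp
      · simpa using hy i k'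
    have := (Finset.sum_eq_zero_iff_of_nonneg hterm).1 hold k (Finset.mem_univ k)
    rwa [if_neg hk, one_mul] at this
  -- general transfer identity
  have key : ∀ (i : Fin n) (g : Fin t → ℤ) (G : Fin ((2*Δ+1)^(m+d)) → ℤ),
      (∀ k, (Fib Δ B D i k).Nonempty → G k = g (jsel Δ B D c j₀ i k)) →
      ∑ j, g j * (if jsel Δ B D c j₀ i (enc Δ B D i j) = j then y i (enc Δ B D i j) else 0)
        = ∑ k, G k * y i k := by
    intro i g G hG
    rw [sum_mul_sel B D c j₀ i g (y i)]
    refine Finset.sum_congr rfl fun k _ => ?_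
    by_cases hk : (Fib Δ B D i k).Nonempty
    · rw [if_pos hk, hG k hk]
    · rw [if_neg hk, hy0 i k hk]; simp
  refine ⟨fun i j => if jsel Δ B D c j₀ i (enc Δ B D i j) = j then y i (enc Δ B D i j) else 0,
    ⟨hx0, ?_, ?_, ?_⟩, ?_⟩
  · intro i j
    dsimp only
    split
    · exact hy i _
    · exact le_refl 0
  · -- main constraint
    have hBeq : ∀ i, (B i).mulVec
        (fun j => if jsel Δ B D c j₀ i (enc Δ B D i j) = j then y i (enc Δ B D i j) else 0)
        = (Bmat Δ m d).mulVec (y i) := by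
      intro i; funext r
      simp only [Matrix.mulVec, dotProduct]
      refine key i (fun j => B i r j) (fun k => Bmat Δ m d r k) ?_
      intro k hk
      have h1 := colv_enc_left Δ B D hB hD i (jsel Δ B D c j₀ i k) r
      rw [enc_jsel hk] at h1
      simp only [Bmat]
      exact h1
    calc A.mulVec x0 + ∑ i, (B i).mulVec _
        = A.mulVec x0 + ∑ i, (Bmat Δ m d).mulVec (y i) := by
          congr 1; exact Finset.sum_congr rfl fun i _ => hBeq i
      _ = b0 := hmain
  · -- local constraints
    intro i; funext r
    have hr : ((⟨(r:ℕ), by omega⟩ : Fin (d+1)) : ℕ) < d := r.isLt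
    have hold := congrFun (hloc i) ⟨(r:ℕ), by omega⟩
    simp only [Pi.add_apply, Matrix.mulVec, dotProduct, Cmat, Dmat, bvec,
      dif_pos hr] at hold
    have hfin : (⟨((⟨(r:ℕ), by omega⟩ : Fin (d+1)) : ℕ), hr⟩ : Fin d) = r := by
      ext; simp
    rw [hfin] at hold
    simp only [Pi.add_apply, Matrix.mulVec, dotProduct]
    rw [← hold]
    congr 1
    refine key i (fun j => D i r j) (fun k => colv Δ (m+d) k (Fin.natAdd m r)) ?_
    intro k hk
    have h1 := colv_enc_right Δ B D hB hD i (jsel Δ B D c j₀ i k) r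
    rw [enc_jsel hk] at h1
    exact h1
  · -- objective
    simp only [FourBlockObj]
    congr 1
    refine Finset.sum_congr rfl fun i _ => ?_
    simp only [dotProduct]
    refine key i (c i) (cvec Δ B D c j₀ i) ?_
    intro k hk
    rw [cvec, if_pos hk]
end BUredAux

/-- Every 4-block ILP with entries of absolute value at most `Δ̄` can be reduced to
a `B`-uniform 4-block ILP with the same `n, m, s`, with `t' = (2Δ̄+1)^{m+d}` local
variables and `d + 1` local constraints per brick, entries of absolute value at
most `max Δ̄ 1`, the same feasibility status, and the same infimum of objective
values (taken in `ℝ`). -/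
theorem reduction_to_B_uniform
    (n m s t d Δ : ℕ) (hn : 1 ≤ n) (hm : 1 ≤ m) (hs : 1 ≤ s) (ht : 1 ≤ t)
    (hd : 1 ≤ d) (hΔ : 1 ≤ Δ)
    (A : Matrix (Fin m) (Fin s) ℤ) (B : Fin n → Matrix (Fin m) (Fin t) ℤ)
    (C : Fin n → Matrix (Fin d) (Fin s) ℤ) (D : Fin n → Matrix (Fin d) (Fin t) ℤ)
    (hA : ∀ i j, |A i j| ≤ (Δ : ℤ)) (hB : ∀ k i j, |B k i j| ≤ (Δ : ℤ))
    (hC : ∀ k i j, |C k i j| ≤ (Δ : ℤ)) (hD : ∀ k i j, |D k i j| ≤ (Δ : ℤ))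
    (b0 : Fin m → ℤ) (b : Fin n → Fin d → ℤ)
    (c0 : Fin s → ℤ) (c : Fin n → Fin t → ℤ) :
    ∃ (A' : Matrix (Fin m) (Fin s) ℤ)
      (B' : Matrix (Fin m) (Fin ((2 * Δ + 1) ^ (m + d))) ℤ)
      (C' : Fin n → Matrix (Fin (d + 1)) (Fin s) ℤ)
      (D' : Fin n → Matrix (Fin (d + 1)) (Fin ((2 * Δ + 1) ^ (m + d))) ℤ)
      (b0' : Fin m → ℤ) (b' : Fin n → Fin (d + 1) → ℤ)
      (c0' : Fin s → ℤ) (c' : Fin n → Fin ((2 * Δ + 1) ^ (m + d)) → ℤ),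
      (∀ i j, |A' i j| ≤ (max Δ 1 : ℤ)) ∧
      (∀ i j, |B' i j| ≤ (max Δ 1 : ℤ)) ∧
      (∀ k i j, |C' k i j| ≤ (max Δ 1 : ℤ)) ∧
      (∀ k i j, |D' k i j| ≤ (max Δ 1 : ℤ)) ∧
      ((∃ x0 x, FourBlockFeasible A' (fun _ => B') C' D' b0' b' x0 x) ↔
        (∃ x0 x, FourBlockFeasible A B C D b0 b x0 x)) ∧
      sInf {v : ℝ | ∃ x0 x, FourBlockFeasible A' (fun _ => B') C' D' b0' b' x0 x ∧
          ((FourBlockObj c0' c' x0 x : ℤ) : ℝ) = v} =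
        sInf {v : ℝ | ∃ x0 x, FourBlockFeasible A B C D b0 b x0 x ∧
          ((FourBlockObj c0 c x0 x : ℤ) : ℝ) = v} := by
  have j₀ : Fin t := ⟨0, ht⟩
  have hΔmax : (Δ : ℤ) ≤ (max Δ 1 : ℤ) := by push_cast; exact le_max_left _ _
  have h1max : (1 : ℤ) ≤ (max Δ 1 : ℤ) := by push_cast; exact le_max_right _ _
  refine ⟨A, BUredAux.Bmat Δ m d, BUredAux.Cmat C, BUredAux.Dmat Δ B D, b0, BUredAux.bvec b,
    c0, BUredAux.cvec Δ B D c j₀, fun i j => (hA i j).trans hΔmax, ?_, ?_, ?_, ?_, ?_⟩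
  · intro r k
    exact (BUredAux.abs_colv_le Δ (m+d) k (Fin.castAdd d r)).trans hΔmax
  · intro k r j
    simp only [BUredAux.Cmat]
    split
    · exact (hC _ _ _).trans hΔmax
    · simp only [abs_zero]; exact zero_le_one.trans h1max
  · intro i r k
    simp only [BUredAux.Dmat]
    split
    · exact (BUredAux.abs_colv_le _ _ _ _).trans hΔmax
    · split
      · simp only [abs_zero]; exact zero_le_one.trans h1max
      · simp only [abs_one]; exact h1max
  · constructor
    · rintro ⟨x0', y, hfy⟩
      obtain ⟨x, hx, -⟩ := BUredAux.backward Δ j₀ A B C D hB hD b0 b c0 c x0' y hfy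
      exact ⟨x0', x, hx⟩
    · rintro ⟨x0', x, hfx⟩
      obtain ⟨y, hy, -⟩ := BUredAux.forward Δ j₀ A B C D hB hD b0 b c0 c x0' x hfx
      exact ⟨x0', y, hy⟩
  · apply BUredAux.sInf_eq_of_subset
    · rintro v ⟨x0', y, hfy, rfl⟩
      obtain ⟨x, hx, hobj⟩ := BUredAux.backward Δ j₀ A B C D hB hD b0 b c0 c x0' y hfy
      exact ⟨x0', x, hx, by rw [hobj]⟩
    · rintro v ⟨x0', x, hfx, rfl⟩
      obtain ⟨y, hy, hle⟩ := BUredAux.forward Δ j₀ A B C D hB hD b0 b c0 c x0' x hfx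
      exact ⟨_, ⟨x0', y, hy, rfl⟩, by exact_mod_cast hle⟩
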